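/- T_{p,q}(r,s) is nonempty if and only if p divides r + sq. -/

import Mathlib

open Finset

lemma aux_count_window (p g t ρ : ℕ) (hg : 0 < g) (hgp : g ∣ p) (hgt : g ∣ t) (htp : t ≤ p) :
    ((range p).filter fun v => p - t ≤ v ∧ v % g = ρ % g).card = t / g := by
  classical
  have hsplit : (range p).filter (fun v => p - t ≤ v ∧ v % g = ρ % g)
      = (range p).filter (fun v => v ≡ ρ [MOD g]) \ (range (p - t)).filter (fun v => v ≡ ρ [MOD g]) := by
    ext v
    simp only [Finset.mem_filter, mem_sdiff, Finset.mem_range]; unfold Nat.ModEq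
    constructor
    · rintro ⟨hv, hle, hm⟩; exact ⟨⟨hv, hm⟩, fun h => by omega⟩
    · rintro ⟨⟨hv, hm⟩, h⟩
      refine ⟨hv, ?_, hm⟩
      by_contra hcon
      exact h ⟨by omega, hm⟩
  have h1 : p % g = 0 := Nat.mod_eq_zero_of_dvd hgp
  have h2 : (p - t) % g = 0 := Nat.mod_eq_zero_of_dvd (Nat.dvd_sub hgp hgt)
  have h3 : p / g = (p - t) / g + t / g := by
    conv_lhs => rw [show p = (p - t) + t by omega]
    exact Nat.add_div_of_dvd_left hgt
  rw [hsplit, card_sdiff_of_subset]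
  · rw [← Nat.count_eq_card_filter_range, ← Nat.count_eq_card_filter_range,
      Nat.count_modEq_card _ hg, Nat.count_modEq_card _ hg, h1, h2]
    simp only [Nat.not_lt_zero, if_false]
    rw [h3]
    simp
  · intro v hv
    simp only [mem_filter, mem_range] at *
    exact ⟨by omega, hv.2⟩

section
variable (p : ℕ) [NeZero p]

lemma aux_mul_val_dvd (s : ℕ) (x : ZMod p) : Nat.gcd s p ∣ ((s : ZMod p) * x).val := by
  have hx : (s : ZMod p) * x = ((s * x.val : ℕ) : ZMod p) := by
    rw [Nat.cast_mul, ZMod.natCast_zmod_val]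
  rw [hx, ZMod.val_natCast]
  exact (Nat.dvd_mod_iff (Nat.gcd_dvd_right s p)).mpr (Dvd.dvd.mul_right (Nat.gcd_dvd_left s p) _)

lemma aux_range_char (s : ℕ) (w : ZMod p) (hw : Nat.gcd s p ∣ w.val) :
    ∃ x : ZMod p, (s : ZMod p) * x = w := by
  have hbez : ((Nat.gcd s p : ℕ) : ZMod p) = (s : ZMod p) * ((Nat.gcdA s p : ℤ) : ZMod p) := by
    have h := Nat.gcd_eq_gcd_ab s p
    have h2 : ((Nat.gcd s p : ℤ) : ZMod p) = ((s * Nat.gcdA s p + p * Nat.gcdB s p : ℤ) : ZMod p) := by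
      rw [← h]
    push_cast at h2
    rw [ZMod.natCast_self] at h2
    simpa using h2
  obtain ⟨m, hm⟩ := hw
  refine ⟨((Nat.gcdA s p : ℤ) : ZMod p) * (m : ZMod p), ?_⟩
  have hw2 : w = ((w.val : ℕ) : ZMod p) := (ZMod.natCast_zmod_val w).symm
  rw [hw2, hm]
  push_cast
  rw [hbez]
  ring

lemma aux_ker_card (s : ℕ) :
    ((univ : Finset (ZMod p)).filter fun x => (s : ZMod p) * x = 0).card = Nat.gcd s p := by
  classical
  set g := Nat.gcd s p with hgdef
  have hp0 : 0 < p := Nat.pos_of_ne_zero (NeZero.ne p)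
  have hg0 : 0 < g := Nat.gcd_pos_of_pos_right s hp0
  have hgp : g ∣ p := Nat.gcd_dvd_right s p
  have hgs : g ∣ s := Nat.gcd_dvd_left s p
  have hpg0 : 0 < p / g := Nat.div_pos (Nat.le_of_dvd hp0 hgp) hg0
  have hpgg : (p / g) * g = p := Nat.div_mul_cancel hgp
  have hchar : ∀ x : ZMod p, ((s : ZMod p) * x = 0 ↔ (p / g) ∣ x.val) := by
    intro x
    have hx : (s : ZMod p) * x = ((s * x.val : ℕ) : ZMod p) := by
      rw [Nat.cast_mul, ZMod.natCast_zmod_val]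
    rw [hx, ZMod.natCast_eq_zero_iff]
    constructor
    · intro h
      have h2 : (p / g) ∣ (s / g) * x.val := by
        obtain ⟨m, hm⟩ := h
        refine ⟨m, ?_⟩
        have h3 : g * ((s / g) * x.val) = g * ((p / g) * m) := by
          rw [← Nat.mul_assoc, Nat.mul_div_cancel' hgs, ← Nat.mul_assoc, Nat.mul_div_cancel' hgp, hm]
        exact Nat.eq_of_mul_eq_mul_left hg0 h3
      have hco : Nat.Coprime (s / g) (p / g) := Nat.coprime_div_gcd_div_gcd hg0
      exact hco.symm.dvd_of_dvd_mul_left h2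
    · rintro ⟨m, hm⟩
      refine ⟨(s / g) * m, ?_⟩
      rw [hm, ← Nat.mul_assoc]
      have h4 : s * (p / g) = (s / g) * p := by
        rw [← Nat.mul_div_assoc s hgp, Nat.mul_comm s p, Nat.mul_div_assoc p hgs, Nat.mul_comm]
      rw [h4]
      ring
  have hre : ((univ : Finset (ZMod p)).filter fun x => (s : ZMod p) * x = 0)
      = ((univ : Finset (ZMod p)).filter fun x => (p / g) ∣ x.val) := by
    apply filter_congr
    intro x _
    simp [hchar x]
  rw [hre]
  refine Eq.trans ?_ (card_range g)
  apply Finset.card_nbij' (i := fun x : ZMod p => x.val / (p / g))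
    (j := fun i : ℕ => (((p / g) * i : ℕ) : ZMod p)) (t := range g)
  · intro x hx
    simp only [mem_coe, mem_filter, mem_univ, true_and] at hx
    simp only [mem_coe, mem_range]
    have := ZMod.val_lt x
    exact Nat.div_lt_of_lt_mul (by omega)
  · intro i hi
    simp only [mem_coe, mem_range] at hi
    simp only [mem_coe, mem_filter, mem_univ, true_and]
    have hlt : (p / g) * i < p := by
      calc (p / g) * i < (p / g) * g := by
            exact Nat.mul_lt_mul_of_pos_left hi hpg0
        _ = p := hpgg
    rw [ZMod.val_natCast, Nat.mod_eq_of_lt hlt]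
    exact Dvd.intro i rfl
  · intro x hx
    simp only [mem_coe, mem_filter, mem_univ, true_and] at hx
    dsimp only
    rw [Nat.mul_div_cancel' hx, ZMod.natCast_zmod_val]
  · intro i hi
    simp only [mem_coe, mem_range] at hi
    have hlt : (p / g) * i < p := by
      calc (p / g) * i < (p / g) * g := Nat.mul_lt_mul_of_pos_left hi hpg0
        _ = p := hpgg
    dsimp only
    rw [ZMod.val_natCast, Nat.mod_eq_of_lt hlt, Nat.mul_div_cancel_left i hpg0]

end

lemma aux_card_mulShift (p : ℕ) [NeZero p] (s t : ℕ) (c : ZMod p) (htp : t ≤ p)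
    (hd : Nat.gcd s p ∣ t) :
    ((univ : Finset (ZMod p)).filter fun x => p - t ≤ ((s : ZMod p) * x + c).val).card = t := by
  classical
  set g := Nat.gcd s p with hgdef
  have hp0 : 0 < p := Nat.pos_of_ne_zero (NeZero.ne p)
  have hg0 : 0 < g := Nat.gcd_pos_of_pos_right s hp0
  have hgp : g ∣ p := Nat.gcd_dvd_right s p
  have hfiber : ∀ y : ZMod p, g ∣ (y - c).val →
      ((univ : Finset (ZMod p)).filter fun x => (s : ZMod p) * x + c = y).card = g := by
    intro y hy
    obtain ⟨x0, hx0⟩ := aux_range_char p s (y - c) hy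
    rw [hgdef, ← aux_ker_card p s]
    apply Finset.card_nbij' (i := fun x : ZMod p => x - x0) (j := fun x : ZMod p => x + x0)
    · intro a ha
      simp only [mem_coe, mem_filter, mem_univ, true_and] at *
      rw [mul_sub, hx0, eq_sub_of_add_eq ha, sub_self]
    · intro a ha
      simp only [mem_coe, mem_filter, mem_univ, true_and] at *
      rw [mul_add, hx0, ha]
      ring
    · intro a _; ring
    · intro a _; ring
  have hcond : ∀ y : ZMod p, (g ∣ (y - c).val ↔ y.val % g = c.val % g) := by
    intro y
    have hyc : y = ((((y - c).val + c.val : ℕ)) : ZMod p) := by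
      rw [Nat.cast_add, ZMod.natCast_zmod_val, ZMod.natCast_zmod_val]
      ring
    have hval : y.val = ((y - c).val + c.val) % p := by
      conv_lhs => rw [hyc]
      rw [ZMod.val_natCast]
    have hvalg : y.val % g = ((y - c).val + c.val) % g := by
      rw [hval, Nat.mod_mod_of_dvd _ hgp]
    constructor
    · rintro ⟨m, hm⟩
      rw [hvalg, hm, Nat.mul_add_mod]
    · intro h
      have h2 : (y - c).val + c.val ≡ 0 + c.val [MOD g] := by
        unfold Nat.ModEq
        rw [zero_add, ← hvalg, h]
      have h3 := Nat.ModEq.add_right_cancel' c.val h2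
      exact (Nat.modEq_zero_iff_dvd).mp h3
  set T := (univ : Finset (ZMod p)).filter
      (fun y : ZMod p => p - t ≤ y.val ∧ y.val % g = c.val % g) with hTdef
  have hmap : ∀ x ∈ (univ : Finset (ZMod p)).filter
      (fun x => p - t ≤ ((s : ZMod p) * x + c).val), (s : ZMod p) * x + c ∈ T := by
    intro x hx
    simp only [mem_filter, mem_univ, true_and] at hx
    rw [hTdef]
    simp only [mem_filter, mem_univ, true_and]
    refine ⟨hx, ?_⟩
    rw [← hcond]
    simpa using aux_mul_val_dvd p s x
  rw [Finset.card_eq_sum_card_fiberwise hmap]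
  have hconst : ∀ y ∈ T, (((univ : Finset (ZMod p)).filter
      (fun x => p - t ≤ ((s : ZMod p) * x + c).val)).filter
        (fun x => (s : ZMod p) * x + c = y)).card = g := by
    intro y hy
    simp only [hTdef, mem_filter, mem_univ, true_and] at hy
    have heq : (((univ : Finset (ZMod p)).filter
        (fun x => p - t ≤ ((s : ZMod p) * x + c).val)).filter
          (fun x => (s : ZMod p) * x + c = y))
        = (univ : Finset (ZMod p)).filter (fun x => (s : ZMod p) * x + c = y) := by
      ext a
      simp only [mem_filter, mem_univ, true_and]
      constructor
      · tauto
      · intro h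
        refine ⟨?_, h⟩
        rw [h]
        exact hy.1
    rw [heq]
    exact hfiber y ((hcond y).mpr hy.2)
  rw [Finset.sum_congr rfl hconst, Finset.sum_const, smul_eq_mul]
  have hT : T.card = t / g := by
    rw [← aux_count_window p g t c.val hg0 hgp hd htp]
    apply Finset.card_nbij' (i := fun y : ZMod p => y.val) (j := fun v : ℕ => (v : ZMod p))
    · intro a ha
      simp only [hTdef, mem_coe, mem_filter, mem_univ, true_and, mem_range] at *
      exact ⟨ZMod.val_lt a, ha⟩
    · intro v hv
      simp only [hTdef, mem_coe, mem_filter, mem_univ, true_and, mem_range] at *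
      rw [ZMod.val_natCast, Nat.mod_eq_of_lt hv.1]
      exact hv.2
    · intro a _
      exact ZMod.natCast_zmod_val a
    · intro v hv
      simp only [mem_coe, mem_filter, mem_range] at hv
      dsimp only
      rw [ZMod.val_natCast, Nat.mod_eq_of_lt hv.1]
  rw [hT, Nat.div_mul_cancel hd]

lemma aux_K1 (p r s u : ℕ) (hrs : r + s ≤ p) (hu : u < p)
    (h1 : p - r ≤ u) (h2 : p - s ≤ (u + r) % p) : False := by
  rcases Nat.lt_or_ge (u + r) p with h | h
  · rw [Nat.mod_eq_of_lt h] at h2; omega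
  · rw [Nat.mod_eq_sub_mod h, Nat.mod_eq_of_lt (by omega)] at h2; omega

lemma aux_K3 (p r s u : ℕ) (hu : u < p) (h1 : p - r ≤ u) :
    p - s ≤ u ∨ p - r ≤ (u + s) % p := by
  rcases Nat.lt_or_ge (u + s) p with h | h
  · right; rw [Nat.mod_eq_of_lt h]; omega
  · left; omega

lemma aux_K4 (p r s u : ℕ) (hrs : r + s ≤ p) (hu : u < p)
    (h2 : p - s ≤ (u + r) % p) : p - s ≤ u ∨ p - r ≤ (u + s) % p := by
  by_cases hus : p - s ≤ u
  · left; exact hus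
  · right
    rcases Nat.lt_or_ge (u + r) p with h | h
    · rw [Nat.mod_eq_of_lt h] at h2
      rw [Nat.mod_eq_of_lt (by omega)]
      omega
    · rw [Nat.mod_eq_sub_mod h, Nat.mod_eq_of_lt (by omega)] at h2
      exfalso; omega

/-- `T_{p,q}(r,s)`: permutations of `{1,…,p}` (modeled as `ZMod p`) with exactly `p-r-s` fixed
points, exactly `r` indices with `σ j - j ≡ 1`, and exactly `s` indices with `σ j - j ≡ q`. -/
def Tset (p q r s : ℕ) [NeZero p] : Set (Equiv.Perm (ZMod p)) :=
  {σ | (Finset.univ.filter fun j : ZMod p => σ j = j).card = p - r - s ∧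
       (Finset.univ.filter fun j : ZMod p => σ j - j = 1).card = r ∧
       (Finset.univ.filter fun j : ZMod p => σ j - j = (q : ZMod p)).card = s}

/-- `T_{p,q}(r,s)` is nonempty if and only if `p` divides `r + sq`. -/
theorem Tset_nonempty_iff (p q r s : ℕ) [NeZero p] (hq : 1 < q) (hqp : q < p)
    (hrs : r + s ≤ p) :
    (Tset p q r s).Nonempty ↔ p ∣ r + s * q := by
  classical
  have hp3 : 3 ≤ p := by omega
  have hp1 : 1 < p := by omega
  haveI : Fact (1 < p) := ⟨hp1⟩
  have hq0 : (q : ZMod p) ≠ 0 := by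
    rw [Ne, ZMod.natCast_eq_zero_iff]
    intro h
    have := Nat.le_of_dvd (by omega) h
    omega
  have hq1 : (q : ZMod p) ≠ 1 := by
    intro h
    have h2 : (q : ZMod p).val = ((1 : ℕ) : ZMod p).val := by
      rw [h]; norm_cast
    rw [ZMod.val_natCast_of_lt hqp, ZMod.val_natCast_of_lt hp1] at h2
    omega
  have h10 : (1 : ZMod p) ≠ 0 := one_ne_zero
  constructor
  · rintro ⟨σ, hfix, h1c, hqc⟩
    set F0 := univ.filter (fun j : ZMod p => σ j = j) with hF0
    set F1 := univ.filter (fun j : ZMod p => σ j - j = 1) with hF1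
    set F2 := univ.filter (fun j : ZMod p => σ j - j = (q : ZMod p)) with hF2
    have d01 : Disjoint F0 F1 := by
      rw [Finset.disjoint_left]
      intro a ha hb
      rw [hF0, mem_filter] at ha
      rw [hF1, mem_filter] at hb
      apply h10
      rw [← hb.2, ha.2, sub_self]
    have d02 : Disjoint F0 F2 := by
      rw [Finset.disjoint_left]
      intro a ha hb
      rw [hF0, mem_filter] at ha
      rw [hF2, mem_filter] at hb
      apply hq0
      rw [← hb.2, ha.2, sub_self]
    have d12 : Disjoint F1 F2 := by
      rw [Finset.disjoint_left]
      intro a ha hb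
      rw [hF1, mem_filter] at ha
      rw [hF2, mem_filter] at hb
      apply hq1
      rw [← hb.2, ha.2]
    have hd012 : Disjoint (F0 ∪ F1) F2 := by
      rw [Finset.disjoint_union_left]
      exact ⟨d02, d12⟩
    have huniv : F0 ∪ F1 ∪ F2 = univ := by
      apply Finset.eq_univ_of_card
      rw [card_union_of_disjoint hd012, card_union_of_disjoint d01, hfix, h1c, hqc, ZMod.card]
      omega
    have hsum0 : ∑ j : ZMod p, (σ j - j) = 0 := by
      rw [Finset.sum_sub_distrib]
      have := Equiv.sum_comp σ (fun j : ZMod p => j)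
      rw [this, sub_self]
    rw [← huniv, Finset.sum_union hd012, Finset.sum_union d01] at hsum0
    have e0 : ∑ j ∈ F0, (σ j - j) = 0 := by
      apply Finset.sum_eq_zero
      intro j hj
      rw [hF0, mem_filter] at hj
      rw [hj.2, sub_self]
    have e1 : ∑ j ∈ F1, (σ j - j) = (r : ZMod p) := by
      have h' : ∑ j ∈ F1, (σ j - j) = ∑ _j ∈ F1, (1 : ZMod p) :=
        Finset.sum_congr rfl (fun j hj => (mem_filter.mp hj).2)
      rw [h', Finset.sum_const, h1c, nsmul_eq_mul, mul_one]
    have e2 : ∑ j ∈ F2, (σ j - j) = (s : ZMod p) * (q : ZMod p) := by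
      have h' : ∑ j ∈ F2, (σ j - j) = ∑ _j ∈ F2, (q : ZMod p) :=
        Finset.sum_congr rfl (fun j hj => (mem_filter.mp hj).2)
      rw [h', Finset.sum_const, hqc, nsmul_eq_mul]
    rw [e0, e1, e2, zero_add] at hsum0
    rw [← ZMod.natCast_eq_zero_iff]
    push_cast
    exact hsum0
  · intro hdvd
    have hsq : (s : ZMod p) * (q : ZMod p) = - (r : ZMod p) := by
      have h0 : ((r + s * q : ℕ) : ZMod p) = 0 := (ZMod.natCast_eq_zero_iff _ p).mpr hdvd
      push_cast at h0
      linear_combination h0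
    set A := univ.filter (fun x : ZMod p =>
      p - r ≤ ((s : ZMod p) * x + ((s : ZMod p) - 1)).val) with hA
    set B := univ.filter (fun x : ZMod p =>
      p - s ≤ ((s : ZMod p) * x + (-1 : ZMod p)).val) with hB
    -- helper : val of w + (m:ℕ)
    have hval_add : ∀ (w : ZMod p) (m : ℕ), (w + (m : ZMod p)).val = (w.val + m) % p := by
      intro w m
      conv_lhs => rw [← ZMod.natCast_zmod_val w]
      rw [← Nat.cast_add, ZMod.val_natCast]
    -- membership characterizations relative to z
    have hmem : ∀ z : ZMod p,
        (z - 1 ∈ A ↔ p - r ≤ ((s : ZMod p) * z + (-1 : ZMod p)).val) ∧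
        (z ∈ B ↔ p - s ≤ ((s : ZMod p) * z + (-1 : ZMod p)).val) ∧
        (z ∈ A ↔ p - r ≤ (((s : ZMod p) * z + (-1 : ZMod p)).val + s) % p) ∧
        (z - q ∈ B ↔ p - s ≤ (((s : ZMod p) * z + (-1 : ZMod p)).val + r) % p) := by
      intro z
      refine ⟨?_, ?_, ?_, ?_⟩
      · rw [hA, mem_filter]
        simp only [mem_univ, true_and]
        have he : (s : ZMod p) * (z - 1) + ((s : ZMod p) - 1) = (s : ZMod p) * z + (-1 : ZMod p) := by
          ring
        rw [he]
      · rw [hB, mem_filter]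
        simp only [mem_univ, true_and]
      · rw [hA, mem_filter]
        simp only [mem_univ, true_and]
        have he : (s : ZMod p) * z + ((s : ZMod p) - 1)
            = ((s : ZMod p) * z + (-1 : ZMod p)) + ((s : ℕ) : ZMod p) := by ring
        rw [he, hval_add]
      · rw [hB, mem_filter]
        simp only [mem_univ, true_and]
        have he : (s : ZMod p) * (z - q) + (-1 : ZMod p)
            = ((s : ZMod p) * z + (-1 : ZMod p)) + ((r : ℕ) : ZMod p) := by
          push_cast
          linear_combination -hsq
        rw [he, hval_add]
    -- the function
    set f : ZMod p → ZMod p := fun x => if x ∈ A then x + 1 else if x ∈ B then x + q else x with hf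
    have hclassify : ∀ w z : ZMod p, f w = z →
        (w ∈ A ∧ w = z - 1) ∨ (w ∉ A ∧ w ∈ B ∧ w = z - q) ∨ (w ∉ A ∧ w ∉ B ∧ w = z) := by
      intro w z hw
      by_cases h1 : w ∈ A
      · left
        refine ⟨h1, ?_⟩
        rw [hf] at hw
        simp only [if_pos h1] at hw
        exact eq_sub_of_add_eq hw
      · by_cases h2 : w ∈ B
        · right; left
          refine ⟨h1, h2, ?_⟩
          rw [hf] at hw
          simp only [if_neg h1, if_pos h2] at hw
          exact eq_sub_of_add_eq hw
        · right; right
          refine ⟨h1, h2, ?_⟩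
          rw [hf] at hw
          simp only [if_neg h1, if_neg h2] at hw
          exact hw
    have hinj : Function.Injective f := by
      intro x x' hxx
      set z := f x with hz
      have hcx := hclassify x z rfl
      have hcx' := hclassify x' z hxx.symm
      obtain ⟨huz, hu2, hu3, hu4⟩ := hmem z
      set u := ((s : ZMod p) * z + (-1 : ZMod p)).val with hu
      have hulp : u < p := ZMod.val_lt _
      rcases hcx with ⟨ha, hx⟩ | ⟨hna, hb, hx⟩ | ⟨hna, hnb, hx⟩ <;>
        rcases hcx' with ⟨ha', hx'⟩ | ⟨hna', hb', hx'⟩ | ⟨hna', hnb', hx'⟩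
      · rw [hx, hx']
      · exfalso
        rw [hx] at ha
        rw [hx'] at hb'
        exact aux_K1 p r s u hrs hulp (huz.mp ha) (hu4.mp hb')
      · exfalso
        rw [hx] at ha
        rw [hx'] at hna' hnb'
        rcases aux_K3 p r s u hulp (huz.mp ha) with h | h
        · exact hnb' (hu2.mpr h)
        · exact hna' (hu3.mpr h)
      · exfalso
        rw [hx'] at ha'
        rw [hx] at hb
        exact aux_K1 p r s u hrs hulp (huz.mp ha') (hu4.mp hb)
      · rw [hx, hx']
      · exfalso
        rw [hx] at hb
        rw [hx'] at hna' hnb'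
        rcases aux_K4 p r s u hrs hulp (hu4.mp hb) with h | h
        · exact hnb' (hu2.mpr h)
        · exact hna' (hu3.mpr h)
      · exfalso
        rw [hx'] at ha'
        rw [hx] at hna hnb
        rcases aux_K3 p r s u hulp (huz.mp ha') with h | h
        · exact hnb (hu2.mpr h)
        · exact hna (hu3.mpr h)
      · exfalso
        rw [hx'] at hb'
        rw [hx] at hna hnb
        rcases aux_K4 p r s u hrs hulp (hu4.mp hb') with h | h
        · exact hnb (hu2.mpr h)
        · exact hna (hu3.mpr h)
      · rw [hx, hx']
    have hbij : Function.Bijective f := (Finite.injective_iff_bijective).mp hinj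
    have hgr : Nat.gcd s p ∣ r := by
      have h1 : Nat.gcd s p ∣ r + s * q := dvd_trans (Nat.gcd_dvd_right s p) hdvd
      have h2 : Nat.gcd s p ∣ s * q := Dvd.dvd.mul_right (Nat.gcd_dvd_left s p) q
      exact (Nat.dvd_add_right h2).mp (by rwa [Nat.add_comm] at h1)
    have hABdisj : Disjoint A B := by
      rw [Finset.disjoint_left]
      intro a haA haB
      obtain ⟨huz, hu2, hu3, hu4⟩ := hmem a
      exact aux_K1 p s r ((s : ZMod p) * a + (-1 : ZMod p)).val (by omega) (ZMod.val_lt _)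
        (hu2.mp haB) (hu3.mp haA)
    have hcardA : A.card = r := by
      rw [hA]
      exact aux_card_mulShift p s r ((s : ZMod p) - 1) (by omega) hgr
    have hcardB : B.card = s := by
      rw [hB]
      exact aux_card_mulShift p s s (-1 : ZMod p) (by omega) (Nat.gcd_dvd_left s p)
    have hfa : ∀ x ∈ A, f x = x + 1 := by
      intro x hx
      rw [hf]
      simp only [if_pos hx]
    have hfb : ∀ x : ZMod p, x ∉ A → x ∈ B → f x = x + q := by
      intro x hx hx2
      rw [hf]
      simp only [if_neg hx, if_pos hx2]
    have hff : ∀ x : ZMod p, x ∉ A → x ∉ B → f x = x := by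
      intro x hx hx2
      rw [hf]
      simp only [if_neg hx, if_neg hx2]
    refine ⟨Equiv.ofBijective f hbij, ?_, ?_, ?_⟩
    · -- fixed points
      have hfilt : univ.filter (fun j : ZMod p => Equiv.ofBijective f hbij j = j)
          = univ \ (A ∪ B) := by
        ext x
        simp only [mem_filter, mem_univ, true_and, mem_sdiff, mem_union, Equiv.ofBijective_apply]
        constructor
        · intro h hor
          rcases hor with h' | h'
          · rw [hfa x h'] at h
            exact h10 (by linear_combination h)
          · by_cases hxA : x ∈ A
            · rw [hfa x hxA] at h
              exact h10 (by linear_combination h)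
            · rw [hfb x hxA h'] at h
              exact hq0 (by linear_combination h)
        · intro h1'
          push_neg at h1'
          exact hff x h1'.1 h1'.2
      rw [hfilt, card_sdiff_of_subset (subset_univ _), card_union_of_disjoint hABdisj, hcardA, hcardB,
        card_univ, ZMod.card]
      omega
    · -- displacement 1
      have hfilt : univ.filter (fun j : ZMod p => Equiv.ofBijective f hbij j - j = 1) = A := by
        ext x
        simp only [mem_filter, mem_univ, true_and, Equiv.ofBijective_apply]
        constructor
        · intro h
          by_contra hxA
          by_cases hxB : x ∈ B
          · rw [hfb x hxA hxB] at h
            exact hq1 (by linear_combination h)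
          · rw [hff x hxA hxB] at h
            exact h10 (by linear_combination -h)
        · intro hxA
          rw [hfa x hxA]
          ring
      rw [hfilt, hcardA]
    · -- displacement q
      have hfilt : univ.filter (fun j : ZMod p => Equiv.ofBijective f hbij j - j = (q : ZMod p))
          = B := by
        ext x
        simp only [mem_filter, mem_univ, true_and, Equiv.ofBijective_apply]
        constructor
        · intro h
          by_cases hxA : x ∈ A
          · exfalso
            rw [hfa x hxA] at h
            exact hq1 (by linear_combination -h)
          · by_cases hxB : x ∈ B
            · exact hxB
            · exfalso
              rw [hff x hxA hxB] at h
              exact hq0 (by linear_combination -h)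
        · intro hxB
          rw [hfb x (Finset.disjoint_right.mp hABdisj hxB) hxB]
          ring
      rw [hfilt, hcardB]
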